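/- arXiv:math/0411387 — 2 statements merged into one kernel-verified Lean document; each statement's English description precedes it below -/
import Mathlib

section
/- Let a and b be parking functions of length n. Then a↑ = b↑ if and only if for every finitely supported function m from the positive integers to ℕ, the number of words w with Park(w) = a and evaluation Ev(w) = m equals the number of words w with Park(w) = b and Ev(w) = m. (This expresses that the commutative images of the polynomials G_a and G_b coincide exactly when a and b have the same nondecreasing rearrangement.) -/
open List

/-- `sortW w` is the nondecreasing rearrangement `w↑` of the word `w`. -/
def sortW (w : List ℕ) : List ℕ := w.mergeSort (fun a b => decide (a ≤ b))

/-- `a` is a parking function: a word over the positive integers whose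
nondecreasing rearrangement `a↑ = a'₁ ⋯ a'ₙ` satisfies `a'ᵢ ≤ i` for all `i`. -/
def IsPF (a : List ℕ) : Prop :=
  (∀ x ∈ a, 1 ≤ x) ∧ ∀ i, i < a.length → (sortW a).getD i 0 ≤ i + 1

/-- `dW w = min { i ≥ 1 : #{j : wⱼ ≤ i} < i }`. -/
noncomputable def dW (w : List ℕ) : ℕ := sInf {i | 1 ≤ i ∧ w.countP (fun x => decide (x ≤ i)) < i}

/-- Decrement by one every letter strictly greater than `d`. -/
def decAbove (d : ℕ) (w : List ℕ) : List ℕ := w.map (fun x => if d < x then x - 1 else x)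

lemma mem_dW_set (w : List ℕ) :
    (w.length + 1) ∈ {i | 1 ≤ i ∧ w.countP (fun x => decide (x ≤ i)) < i} := by
  refine ⟨by omega, ?_⟩
  have : w.countP (fun x => decide (x ≤ w.length + 1)) ≤ w.length := List.countP_le_length
  omega

lemma decAbove_sum_lt {w : List ℕ} (h : dW w ≠ w.length + 1) :
    (decAbove (dW w) w).sum < w.sum := by
  have hmem : 1 ≤ dW w ∧ w.countP (fun x => decide (x ≤ dW w)) < dW w := Nat.sInf_mem (⟨_, mem_dW_set w⟩ : Set.Nonempty _)
  have hle : dW w ≤ w.length + 1 := Nat.sInf_le (mem_dW_set w)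
  obtain ⟨h1, h2⟩ := hmem
  have hlen : dW w ≤ w.length := by omega
  -- there is a letter strictly greater than `dW w`
  have hx : ∃ x ∈ w, ¬ (x ≤ dW w) := by
    by_contra hc
    push_neg at hc
    have : w.countP (fun x => decide (x ≤ dW w)) = w.length := by
      rw [List.countP_eq_length]
      intro a ha
      simpa using hc a ha
    omega
  obtain ⟨x, hxw, hxd⟩ := hx
  have := List.sum_lt_sum (l := w) (f := fun y => if dW w < y then y - 1 else y) (g := id)
    (fun i _ => by dsimp; split <;> omega)
    ⟨x, hxw, by dsimp; rw [if_pos (by omega)]; omega⟩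
  simpa [decAbove] using this

/-- The parkization `Park(w)` of a word `w` over the positive integers. -/
noncomputable def park (w : List ℕ) : List ℕ :=
  if h : dW w = w.length + 1 then w
  else
    have : (decAbove (dW w) w).sum < w.sum := decAbove_sum_lt h
    park (decAbove (dW w) w)
termination_by w.sum

/-- The standardization `Std(w)`: its `i`-th letter is `#{j : wⱼ ≤ wᵢ}`. -/
def stdW (w : List ℕ) : List ℕ := w.map (fun x => w.countP (fun y => decide (y ≤ x)))

/-- `v[k]`: shift every letter of `v` by `k`. -/
def shiftW (k : ℕ) (v : List ℕ) : List ℕ := v.map (· + k)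

/-- Shifted concatenation `u • v = u · v[k]`, `k = |u|`. -/
def sconc (u v : List ℕ) : List ℕ := u ++ shiftW u.length v

/-- The multiset of all shuffles of two words, counted with multiplicity. -/
def shuffles : List ℕ → List ℕ → Multiset (List ℕ)
  | [], v => {v}
  | x :: u, [] => {x :: u}
  | x :: u, y :: v =>
      (shuffles u (y :: v)).map (fun w => x :: w) + (shuffles (x :: u) v).map (fun w => y :: w)
termination_by u v => u.length + v.length

/-- Shifted shuffle `u ⋒ v`, a multiset of words. -/
def sshuffle (u v : List ℕ) : Multiset (List ℕ) := shuffles u (shiftW u.length v)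

/-- Iterated shifted shuffle `u₁ ⋒ u₂ ⋒ ⋯ ⋒ u_r`. -/
def itersShuffle : List (List ℕ) → Multiset (List ℕ)
  | [] => {[]}
  | u :: rest => (itersShuffle rest).bind (fun v => sshuffle u v)

/-- Lexicographic pair-encoding `a ⊛ b` of two words of length `n` with letters in `[n]`:
the `i`-th letter is `(aᵢ - 1)·n + bᵢ`. -/
def pairEnc (n : ℕ) (a b : List ℕ) : List ℕ := List.zipWith (fun x y => (x - 1) * n + y) a b

/-- The internal product `a * b := Park(a ⊛ b)` of two parking functions of the same length. -/
noncomputable def iprod (a b : List ℕ) : List ℕ := park (pairEnc a.length a b)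

/-- The word `1^m` of length `m` with all letters equal to `1`. -/
def onesW (m : ℕ) : List ℕ := List.replicate m 1

/-- The multiset (without repetition) of all words `a` with `a↑ = π`. -/
def classM (π : List ℕ) : Multiset (List ℕ) :=
  (↑(π.permutations.dedup) : Multiset (List ℕ)).filter (fun a => sortW a = π)

open Classical in
/-- The finite set of all parking functions of length `n`. -/
noncomputable def PFfin (n : ℕ) : Finset (List ℕ) :=
  ((Finset.univ : Finset (Fin n → Fin n)).image
    (fun f => List.ofFn (fun i => (f i : ℕ) + 1))).filter IsPF

/-- Split a word into consecutive factors of the given lengths. -/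
def splitFactors : List ℕ → List ℕ → List (List ℕ)
  | [], _ => []
  | k :: ks, e => e.take k :: splitFactors ks (e.drop k)

/-- Iterated shifted concatenation. -/
def sconcAll : List (List ℕ) → List ℕ
  | [] => []
  | u :: rest => sconc u (sconcAll rest)

/-- Multiset of tuples `(a₁, …, a_r)` (as lists) with `aᵢ↑ = πᵢ`. -/
def tuplesM : List (List ℕ) → Multiset (List (List ℕ))
  | [] => {[]}
  | p :: ps => (classM p).bind (fun a => (tuplesM ps).map (fun A => a :: A))

/-- `π'` is a successor of `π`: the evaluation of `π'` is obtained from that of `π`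
by merging two consecutive (modulo zeros) nonzero entries onto the left one. -/
def IsSuccEv (π π' : List ℕ) : Prop :=
  ∃ i j : ℕ, 1 ≤ i ∧ i < j ∧ π.count i ≠ 0 ∧ π.count j ≠ 0 ∧
    (∀ k, i < k → k < j → π.count k = 0) ∧
    (∀ m, π'.count m = if m = i then π.count i + π.count j else if m = j then 0 else π.count m)

/-- The partial order `π ⪯ π'`: reflexive–transitive closure of the successor relation. -/
def succeq (π π' : List ℕ) : Prop := Relation.ReflTransGen IsSuccEv π π'

section Aux

lemma sortW_perm (w : List ℕ) : sortW w ~ w := List.mergeSort_perm w _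

lemma sortW_sorted (w : List ℕ) : (sortW w).Pairwise (· ≤ ·) := by
  have h := List.pairwise_mergeSort (le := fun a b : ℕ => decide (a ≤ b))
    (fun a b c hab hbc => by simp_all; omega) (fun a b => by simpa using Nat.le_total a b) w
  exact h.imp (fun h => by simpa using h)

lemma sortW_eq_of_perm {u v : List ℕ} (h : u ~ v) : sortW u = sortW v :=
  List.Perm.eq_of_pairwise' (sortW_sorted u) (sortW_sorted v)
    (((sortW_perm u).trans h).trans (sortW_perm v).symm)

lemma IsPF.of_perm {u a : List ℕ} (h : u ~ a) (ha : IsPF a) : IsPF u := by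
  refine ⟨fun x hx => ha.1 x (h.mem_iff.1 hx), fun i hi => ?_⟩
  rw [sortW_eq_of_perm h]
  exact ha.2 i (h.length_eq ▸ hi)

/-- position permutation action on words -/
def permL (n : ℕ) (σ : Equiv.Perm (Fin n)) (w : List ℕ) : List ℕ :=
  List.ofFn fun i => w.getD (σ i : ℕ) 0

lemma getD_ofFn {n : ℕ} (f : Fin n → ℕ) (i : Fin n) :
    (List.ofFn f).getD (i : ℕ) 0 = f i := by
  rw [List.getD_eq_getElem _ _ (by simpa using i.isLt)]
  simp

lemma ofFn_getD {n : ℕ} {w : List ℕ} (hw : w.length = n) :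
    List.ofFn (fun i : Fin n => w.getD (i : ℕ) 0) = w := by
  subst hw
  have : (fun i : Fin w.length => w.getD (i : ℕ) 0) = w.get := by
    funext i; rw [List.getD_eq_getElem _ _ i.isLt]; simp
  rw [this, List.ofFn_get]

lemma permL_length {n : ℕ} (σ : Equiv.Perm (Fin n)) (w : List ℕ) :
    (permL n σ w).length = n := by simp [permL]

lemma permL_perm {n : ℕ} (σ : Equiv.Perm (Fin n)) {w : List ℕ} (hw : w.length = n) :
    permL n σ w ~ w := by
  calc permL n σ w = List.ofFn ((fun i : Fin n => w.getD (i : ℕ) 0) ∘ σ) := rfl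
    _ ~ List.ofFn (fun i : Fin n => w.getD (i : ℕ) 0) := σ.ofFn_comp_perm _
    _ = w := ofFn_getD hw

lemma permL_permL {n : ℕ} (σ τ : Equiv.Perm (Fin n)) (w : List ℕ) :
    permL n σ (permL n τ w) = permL n (τ * σ) w := by
  unfold permL
  rw [List.ofFn_inj]
  funext i
  exact getD_ofFn (fun j => w.getD (τ j : ℕ) 0) (σ i)

lemma permL_one {n : ℕ} {w : List ℕ} (hw : w.length = n) : permL n 1 w = w := by
  unfold permL; simpa using ofFn_getD hw

lemma permL_inv {n : ℕ} (σ : Equiv.Perm (Fin n)) {w : List ℕ} (hw : w.length = n) :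
    permL n σ (permL n σ⁻¹ w) = w := by
  rw [permL_permL, inv_mul_cancel, permL_one hw]

lemma permL_map {n : ℕ} (σ : Equiv.Perm (Fin n)) {w : List ℕ} (hw : w.length = n)
    (g : ℕ → ℕ) : permL n σ (w.map g) = (permL n σ w).map g := by
  unfold permL
  rw [List.map_ofFn, List.ofFn_inj]
  funext i
  have h1 : (σ i : ℕ) < (w.map g).length := by simp [hw, (σ i).isLt]
  have h2 : (σ i : ℕ) < w.length := by simpa [hw] using (σ i).isLt
  simp only [Function.comp_apply]
  rw [List.getD_eq_getElem _ _ h1, List.getD_eq_getElem _ _ h2, List.getElem_map]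

lemma dW_eq_of_perm {u v : List ℕ} (h : u ~ v) : dW u = dW v := by
  unfold dW
  congr 1
  ext i
  rw [Set.mem_setOf_eq, Set.mem_setOf_eq, h.countP_eq]

lemma park_length (w : List ℕ) : (park w).length = w.length := by
  rw [park]
  split
  · rfl
  · rename_i h
    have hs : (decAbove (dW w) w).sum < w.sum := decAbove_sum_lt h
    rw [park_length (decAbove (dW w) w)]
    simp [decAbove]
termination_by w.sum

lemma park_permL {n : ℕ} (σ : Equiv.Perm (Fin n)) (w : List ℕ) (hw : w.length = n) :
    park (permL n σ w) = permL n σ (park w) := by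
  have hp : permL n σ w ~ w := permL_perm σ hw
  have hd : dW (permL n σ w) = dW w := dW_eq_of_perm hp
  by_cases h : dW w = w.length + 1
  · conv_lhs => rw [park]
    conv_rhs => rw [park]
    rw [dif_pos (by rw [hd, permL_length]; omega), dif_pos h]
  · have hs : (decAbove (dW w) w).sum < w.sum := decAbove_sum_lt h
    conv_lhs => rw [park]
    conv_rhs => rw [park]
    rw [dif_neg (by rw [hd, permL_length]; omega), dif_neg h]
    show park (decAbove (dW (permL n σ w)) (permL n σ w)) = permL n σ (park (decAbove (dW w) w))
    rw [hd]
    have hkey : decAbove (dW w) (permL n σ w) = permL n σ (decAbove (dW w) w) := by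
      simp only [decAbove]
      exact (permL_map σ hw _).symm
    rw [hkey, park_permL σ (decAbove (dW w) w) (by simp [decAbove, hw])]
termination_by w.sum

lemma countP_ge_of_pf {a : List ℕ} (ha : IsPF a) {i : ℕ} (h1 : 1 ≤ i)
    (h2 : i ≤ a.length) : i ≤ a.countP (fun x => decide (x ≤ i)) := by
  set s := sortW a with hs
  have hperm : s ~ a := sortW_perm a
  have hlen : s.length = a.length := hperm.length_eq
  rw [← hperm.countP_eq]
  have hsplit : s.countP (fun x => decide (x ≤ i)) =
      (s.take i).countP (fun x => decide (x ≤ i)) +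
      (s.drop i).countP (fun x => decide (x ≤ i)) := by
    rw [← List.countP_append, List.take_append_drop]
  have htk : (s.take i).countP (fun x => decide (x ≤ i)) = (s.take i).length := by
    rw [List.countP_eq_length]
    intro x hx
    obtain ⟨j, hj, rfl⟩ := List.mem_iff_getElem.1 hx
    have hj' : j < i := lt_of_lt_of_le hj (by simpa using List.length_take_le i s)
    have hjs : j < s.length := by omega
    have := ha.2 j (by omega)
    rw [← hs, List.getD_eq_getElem _ _ hjs] at this
    simp only [List.getElem_take]
    simpa using le_trans this (by omega)
  have hlt : (s.take i).length = i := by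
    rw [List.length_take]; omega
  omega

lemma dW_of_pf {a : List ℕ} (ha : IsPF a) : dW a = a.length + 1 := by
  refine le_antisymm (Nat.sInf_le (mem_dW_set a)) (le_csInf ⟨_, mem_dW_set a⟩ ?_)
  rintro m ⟨h1, h2⟩
  by_contra hm
  have : m ≤ a.length := by omega
  have := countP_ge_of_pf ha h1 this
  omega

lemma park_of_pf {a : List ℕ} (ha : IsPF a) : park a = a := by
  rw [park, dif_pos (dW_of_pf ha)]

lemma exists_permL {n : ℕ} {a b : List ℕ} (hla : a.length = n) (hlb : b.length = n)
    (h : sortW a = sortW b) : ∃ σ : Equiv.Perm (Fin n), b = permL n σ a := by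
  set f : Fin n → ℕ := fun i => a.getD (i : ℕ) 0 with hf
  set g : Fin n → ℕ := fun i => b.getD (i : ℕ) 0 with hg
  have hfa : List.ofFn f = a := ofFn_getD hla
  have hgb : List.ofFn g = b := ofFn_getD hlb
  have hab : a ~ b := ((sortW_perm a).symm.trans (h ▸ sortW_perm b))
  set σa := Tuple.sort f
  set σb := Tuple.sort g
  have heq : List.ofFn (f ∘ σa) = List.ofFn (g ∘ σb) := by
    refine List.Perm.eq_of_sortedLE (List.sortedLE_ofFn_iff.2 (Tuple.monotone_sort f))
      (List.sortedLE_ofFn_iff.2 (Tuple.monotone_sort g)) ?_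
    calc List.ofFn (f ∘ σa) ~ List.ofFn f := σa.ofFn_comp_perm f
      _ = a := hfa
      _ ~ b := hab
      _ = List.ofFn g := hgb.symm
      _ ~ List.ofFn (g ∘ σb) := (σb.ofFn_comp_perm g).symm
  have hfg : f ∘ σa = g ∘ σb := List.ofFn_injective heq
  refine ⟨σa * σb⁻¹, ?_⟩
  rw [← hgb]
  unfold permL
  rw [List.ofFn_inj]
  funext i
  have h2 := congrFun hfg (σb⁻¹ i)
  simp only [Function.comp_apply, Equiv.Perm.inv_def, Equiv.apply_symm_apply, hf, hg] at h2
  rw [Equiv.Perm.mul_apply]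
  exact h2.symm

end Aux


/-- for `a, b ∈ PF_n`, `a↑ = b↑` iff for every finitely supported
`m : ℕ →₀ ℕ`, the number of words `w` with `Park(w) = a` and evaluation `m` equals
the number of words `w` with `Park(w) = b` and evaluation `m`. -/
theorem commutative_image_iff (n : ℕ) (a b : List ℕ) (ha : IsPF a) (hb : IsPF b)
    (hla : a.length = n) (hlb : b.length = n) :
    sortW a = sortW b ↔
      ∀ m : ℕ →₀ ℕ,
        {w : List ℕ | (∀ x ∈ w, 1 ≤ x) ∧ park w = a ∧ ∀ i, w.count i = m i}.ncard =
        {w : List ℕ | (∀ x ∈ w, 1 ≤ x) ∧ park w = b ∧ ∀ i, w.count i = m i}.ncard := by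
  constructor
  · intro h m
    obtain ⟨σ, hσ⟩ := exists_permL hla hlb h
    have himg : {w : List ℕ | (∀ x ∈ w, 1 ≤ x) ∧ park w = b ∧ ∀ i, w.count i = m i} =
        (permL n σ) '' {w : List ℕ | (∀ x ∈ w, 1 ≤ x) ∧ park w = a ∧ ∀ i, w.count i = m i} := by
      ext w
      simp only [Set.mem_setOf_eq, Set.mem_image]
      constructor
      · rintro ⟨hpos, hpark, hcnt⟩
        have hlw : w.length = n := by
          have := park_length w
          rw [hpark, hlb] at this; omega
        refine ⟨permL n σ⁻¹ w, ⟨?_, ?_, ?_⟩, permL_inv σ hlw⟩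
        · intro x hx; exact hpos x ((permL_perm σ⁻¹ hlw).mem_iff.1 hx)
        · rw [park_permL σ⁻¹ w hlw, hpark, hσ, permL_permL, mul_inv_cancel, permL_one hla]
        · intro i; rw [(permL_perm σ⁻¹ hlw).count_eq]; exact hcnt i
      · rintro ⟨u, ⟨hpos, hpark, hcnt⟩, rfl⟩
        have hlu : u.length = n := by
          have := park_length u
          rw [hpark, hla] at this; omega
        refine ⟨fun x hx => hpos x ((permL_perm σ hlu).mem_iff.1 hx), ?_, ?_⟩
        · rw [park_permL σ u hlu, hpark]; exact hσ.symm
        · intro i; rw [(permL_perm σ hlu).count_eq]; exact hcnt i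
    rw [himg, Set.ncard_image_of_injOn]
    rintro u ⟨-, hu, -⟩ v ⟨-, hv, -⟩ huv
    have hlu : u.length = n := by have := park_length u; rw [hu, hla] at this; omega
    have hlv : v.length = n := by have := park_length v; rw [hv, hla] at this; omega
    have h2 := congrArg (permL n σ⁻¹) huv
    rwa [permL_permL, permL_permL, mul_inv_cancel, permL_one hlu, permL_one hlv] at h2
  · intro h
    have key := h ⟨a.toFinset, fun i => a.count i, fun i => by
      simp [List.mem_toFinset, ← List.count_pos_iff, Nat.pos_iff_ne_zero]⟩
    have hSa : {w : List ℕ | (∀ x ∈ w, 1 ≤ x) ∧ park w = a ∧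
        ∀ i, w.count i = a.count i} = {a} := by
      ext w
      simp only [Set.mem_setOf_eq, Set.mem_singleton_iff]
      constructor
      · rintro ⟨hpos, hpark, hcnt⟩
        have hperm : w ~ a := List.perm_iff_count.2 hcnt
        rw [← hpark, park_of_pf (IsPF.of_perm hperm ha)]
      · rintro rfl
        exact ⟨ha.1, park_of_pf ha, fun i => rfl⟩
    have hkey : ({a} : Set (List ℕ)).ncard =
        {w : List ℕ | (∀ x ∈ w, 1 ≤ x) ∧ park w = b ∧ ∀ i, w.count i = a.count i}.ncard := by
      rw [← hSa]; exact key
    rw [Set.ncard_singleton] at hkey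
    obtain ⟨w, hw⟩ := Set.ncard_eq_one.1 hkey.symm
    have hwmem : w ∈ {w : List ℕ | (∀ x ∈ w, 1 ≤ x) ∧ park w = b ∧
        ∀ i, w.count i = a.count i} := by rw [hw]; exact rfl
    obtain ⟨hpos, hpark, hcnt⟩ := hwmem
    have hperm : w ~ a := List.perm_iff_count.2 hcnt
    have hwb : w = b := by rw [← hpark, park_of_pf (IsPF.of_perm hperm ha)]
    rw [← hwb]
    exact (sortW_eq_of_perm hperm).symm
end

section
/- Bialgebra compatibility of PQSym: let a be a parking function of length k, b a parking function of length l, n = k + l, and let 0 ≤ j ≤ n, e ∈ PF_j, f ∈ PF_{n−j}. Then the number, counted with shuffle multiplicity, of words c in the shifted shuffle a ⋒ b such that Park(c_1⋯c_j) = e and Park(c_{j+1}⋯c_n) = f, equals Σ_i M_1(i)·M_2(i), where i ranges over max(0, j−l) ≤ i ≤ min(j, k), M_1(i) is the multiplicity of e in the shifted shuffle Park(a_1⋯a_i) ⋒ Park(b_1⋯b_{j−i}), and M_2(i) is the multiplicity of f in the shifted shuffle Park(a_{i+1}⋯a_k) ⋒ Park(b_{j−i+1}⋯b_l). (This expresses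 Δ(F_a F_b) = Δ(F_a)Δ(F_b), i.e. that PQSym is a bialgebra.) -/
open List

lemma dW_mem (w : List ℕ) : 1 ≤ dW w ∧ w.countP (fun x => decide (x ≤ dW w)) < dW w :=
  Nat.sInf_mem (⟨_, mem_dW_set w⟩ : Set.Nonempty _)

lemma dW_le_len (w : List ℕ) : dW w ≤ w.length + 1 := Nat.sInf_le (mem_dW_set w)

lemma le_countP_of_lt_dW {w : List ℕ} {t : ℕ} (h : t < dW w) :
    t ≤ w.countP (fun x => decide (x ≤ t)) := by
  rcases Nat.eq_zero_or_pos t with h0 | h1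
  · omega
  · have := Nat.notMem_of_lt_sInf (s := {i | 1 ≤ i ∧ w.countP (fun x => decide (x ≤ i)) < i}) h
    simp only [Set.mem_setOf_eq, not_and, not_lt] at this
    exact this h1

lemma dW_eq {w : List ℕ} {d : ℕ} (h1 : 1 ≤ d)
    (h2 : w.countP (fun x => decide (x ≤ d)) < d)
    (h3 : ∀ t, t < d → t ≤ w.countP (fun x => decide (x ≤ t))) : dW w = d := by
  refine le_antisymm (Nat.sInf_le ⟨h1, h2⟩) ?_
  by_contra hc
  push_neg at hc
  have := (dW_mem w).2
  have := h3 _ hc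
  omega

lemma countP_le_succ (w : List ℕ) (d : ℕ) :
    w.countP (fun x => decide (x ≤ d + 1)) = w.countP (fun x => decide (x ≤ d)) + w.count (d+1) := by
  induction w with
  | nil => simp
  | cons x w ih =>
    rw [List.count_cons]
    by_cases hx : x ≤ d
    · rw [List.countP_cons_of_pos (p := fun x => decide (x ≤ d + 1)) (a := x) (l := w) (by simp; omega), List.countP_cons_of_pos (p := fun x => decide (x ≤ d)) (a := x) (l := w) (by simpa)]
      have : ¬ (x = d + 1) := by omega
      simp [this, ih]; omega
    · by_cases hx2 : x = d + 1
      · rw [List.countP_cons_of_pos (p := fun x => decide (x ≤ d + 1)) (a := x) (l := w) (by simp; omega), List.countP_cons_of_neg (p := fun x => decide (x ≤ d)) (a := x) (l := w) (by simp; omega)]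
        simp [hx2, ih]; omega
      · rw [List.countP_cons_of_neg (p := fun x => decide (x ≤ d + 1)) (a := x) (l := w) (by simp; omega), List.countP_cons_of_neg (p := fun x => decide (x ≤ d)) (a := x) (l := w) (by simp; omega)]
        simp [hx2, ih]

lemma ne_dW (w : List ℕ) : ∀ x ∈ w, x ≠ dW w := by
  intro x hx hxd
  obtain ⟨h1, h2⟩ := dW_mem w
  obtain ⟨d', hd'⟩ : ∃ d', dW w = d' + 1 := ⟨dW w - 1, by omega⟩
  have hc := countP_le_succ w d'
  have hlow : d' ≤ w.countP (fun x => decide (x ≤ d')) := le_countP_of_lt_dW (by omega)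
  have : 1 ≤ w.count (d' + 1) := List.count_pos_iff.mpr (by rwa [← hd', ← hxd])
  rw [hd'] at h2
  omega

lemma park_eq_self {w : List ℕ} (h : dW w = w.length + 1) : park w = w := by
  rw [park, dif_pos h]

lemma park_step {w : List ℕ} (h : dW w ≠ w.length + 1) :
    park w = park (decAbove (dW w) w) := by
  rw [park, dif_neg h]

lemma length_decAbove (d : ℕ) (w : List ℕ) : (decAbove d w).length = w.length := by
  simp [decAbove]

def interleave : List Bool → List ℕ → List ℕ → List ℕ
  | true :: m, x :: u, v => x :: interleave m u v
  | false :: m, u, y :: v => y :: interleave m u v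
  | _, _, _ => []

def masksL : ℕ → ℕ → List (List Bool)
  | 0, q => [List.replicate q false]
  | p+1, 0 => [List.replicate (p+1) true]
  | p+1, q+1 => (masksL p (q+1)).map (true :: ·) ++ (masksL (p+1) q).map (false :: ·)

lemma interleave_nil_left (v : List ℕ) : interleave (List.replicate v.length false) [] v = v := by
  induction v with
  | nil => rfl
  | cons y v ih => simpa [_root_.interleave, List.replicate_succ] using ih

lemma interleave_nil_right (u : List ℕ) : interleave (List.replicate u.length true) u [] = u := by
  induction u with
  | nil => rfl
  | cons x u ih => simpa [_root_.interleave, List.replicate_succ] using ih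

lemma shuffles_eq_masks (u v : List ℕ) :
    shuffles u v = ((masksL u.length v.length).map (fun m => interleave m u v) : Multiset (List ℕ)) := by
  induction u generalizing v with
  | nil => simp [shuffles, masksL, interleave_nil_left]
  | cons x u ihu =>
    induction v with
    | nil =>
      have := interleave_nil_right (x :: u)
      simp only [length_cons] at this
      simp [shuffles, masksL, this]
    | cons y v ihv =>
      rw [shuffles, ihu (y :: v), ihv]
      simp only [length_cons, masksL]
      push_cast [List.map_append, List.map_map]
      simp [Function.comp_def, _root_.interleave]

lemma masks_count : ∀ p q : ℕ, ∀ m ∈ masksL p q, m.count true = p ∧ m.count false = q := by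
  intro p
  induction p with
  | zero => intro q m hm; simp [masksL] at hm; simp [hm, List.count_replicate]
  | succ p ihp =>
    intro q
    induction q with
    | zero =>
      intro m hm; simp [masksL] at hm; simp [hm, List.count_replicate]
    | succ q ihq =>
      intro m hm
      simp only [masksL, List.mem_append, List.mem_map] at hm
      rcases hm with ⟨m', hm', rfl⟩ | ⟨m', hm', rfl⟩
      · have := ihp (q+1) m' hm'
        simp [List.count_cons, this]
      · have := ihq m' hm'
        simp [List.count_cons, this]

lemma map_interleave (f : ℕ → ℕ) : ∀ (m : List Bool) (u v : List ℕ),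
    (interleave m u v).map f = interleave m (u.map f) (v.map f) := by
  intro m
  induction m with
  | nil => intro u v; simp [_root_.interleave]
  | cons b m ih =>
    intro u v
    cases b
    · cases v with
      | nil => simp [_root_.interleave]
      | cons y v => simp [_root_.interleave, ih]
    · cases u with
      | nil => simp [_root_.interleave]
      | cons x u => simp [_root_.interleave, ih]

lemma countP_interleave (p : ℕ → Bool) : ∀ (m : List Bool) (u v : List ℕ),
    m.count true = u.length → m.count false = v.length →
    (interleave m u v).countP p = u.countP p + v.countP p := by
  intro m
  induction m with
  | nil =>
    intro u v hu hv
    simp at hu hv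
    rw [eq_comm, List.length_eq_zero_iff] at hu hv
    subst hu; subst hv; simp [_root_.interleave]
  | cons b m ih =>
    intro u v hu hv
    cases b
    · simp [List.count_cons] at hu hv
      cases v with
      | nil => simp at hv
      | cons y v =>
        simp at hv
        rw [_root_.interleave, List.countP_cons, ih u v hu hv, List.countP_cons]
        omega
    · simp [List.count_cons] at hu hv
      cases u with
      | nil => simp at hu
      | cons x u =>
        simp at hu
        rw [_root_.interleave, List.countP_cons, ih u v hu hv, List.countP_cons]
        omega

lemma length_interleave : ∀ (m : List Bool) (u v : List ℕ),
    m.count true = u.length → m.count false = v.length →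
    (interleave m u v).length = u.length + v.length := by
  intro m u v hu hv
  have := countP_interleave (fun _ => true) m u v hu hv
  simpa using this

lemma countP_shiftW_le {t K : ℕ} (h : t ≤ K) (v : List ℕ) (hv : ∀ x ∈ v, 1 ≤ x) :
    (shiftW K v).countP (fun x => decide (x ≤ t)) = 0 := by
  rw [List.countP_eq_zero]
  simp only [shiftW, List.mem_map]
  rintro x ⟨y, hy, rfl⟩
  have := hv y hy
  simp; omega

lemma countP_shiftW_ge {t K : ℕ} (h : K ≤ t) (v : List ℕ) :
    (shiftW K v).countP (fun x => decide (x ≤ t)) = v.countP (fun x => decide (x ≤ t - K)) := by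
  rw [shiftW, List.countP_map]
  exact List.countP_congr (fun x _ => by simp [Function.comp]; omega)

lemma countP_decAbove_lt {t d : ℕ} (h : t < d) (w : List ℕ) :
    (decAbove d w).countP (fun x => decide (x ≤ t)) = w.countP (fun x => decide (x ≤ t)) := by
  rw [decAbove, List.countP_map]
  exact List.countP_congr (fun x _ => by simp [Function.comp]; split <;> omega)

lemma countP_decAbove_ge {t d : ℕ} (h : d ≤ t) (w : List ℕ) :
    (decAbove d w).countP (fun x => decide (x ≤ t)) = w.countP (fun x => decide (x ≤ t + 1)) := by
  rw [decAbove, List.countP_map]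
  exact List.countP_congr (fun x _ => by simp [Function.comp]; split <;> omega)

lemma decAbove_eq_self {d : ℕ} {w : List ℕ} (h : ∀ x ∈ w, x ≤ d) : decAbove d w = w := by
  rw [decAbove]
  conv_rhs => rw [← List.map_id w]
  refine List.map_congr_left (fun x hx => ?_)
  rw [if_neg (by have := h x hx; omega)]; rfl

lemma decAbove_shiftW_all {d K : ℕ} (h1 : 1 ≤ d) (h2 : d ≤ K) (v : List ℕ) (hv : ∀ x ∈ v, 1 ≤ x) :
    decAbove d (shiftW K v) = shiftW (K - 1) v := by
  rw [decAbove, shiftW, List.map_map, shiftW]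
  refine List.map_congr_left (fun x hx => ?_)
  have := hv x hx
  simp only [Function.comp]
  rw [if_pos (by omega)]
  omega

lemma decAbove_shiftW_inner {d K : ℕ} (v : List ℕ) :
    decAbove (K + d) (shiftW K v) = shiftW K (decAbove d v) := by
  rw [decAbove, shiftW, List.map_map, shiftW, decAbove, List.map_map]
  refine List.map_congr_left (fun x hx => ?_)
  simp only [Function.comp]
  split
  · rw [if_pos (by omega)]; omega
  · rw [if_neg (by omega)]


lemma interleave_nil_snd : ∀ (m : List Bool) (u : List ℕ),
    m.count false = 0 → m.count true = u.length → interleave m u [] = u := by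
  intro m
  induction m with
  | nil =>
    intro u _ hu
    simp at hu; rw [eq_comm, List.length_eq_zero_iff] at hu; subst hu; rfl
  | cons b m ih =>
    intro u hf hu
    cases b
    · simp [List.count_cons] at hf
    · simp [List.count_cons] at hf hu
      cases u with
      | nil => simp at hu
      | cons x u =>
        simp at hu
        rw [_root_.interleave, ih u hf hu]

lemma parkpt : ∀ (N K : ℕ) (u v : List ℕ) (m : List Bool),
    u.sum + v.sum + K ≤ N →
    (∀ x ∈ u, 1 ≤ x) → u.length ≤ K →
    (∀ t, t ≤ K → t ≤ u.countP (fun x => decide (x ≤ t)) + (K - u.length)) →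
    (∀ x ∈ v, 1 ≤ x) →
    m.count true = u.length → m.count false = v.length →
    park (interleave m u (shiftW K v)) = interleave m (park u) (shiftW u.length (park v)) := by
  intro N
  induction N using Nat.strong_induction_on with
  | _ N ih =>
  intro K u v m hN h1 h2 h3 h4 hmt hmf
  set i := u.length with hi
  have hmf' : m.count false = (shiftW K v).length := by simpa [shiftW] using hmf
  have hcw : ∀ p : ℕ → Bool, (interleave m u (shiftW K v)).countP p
      = u.countP p + (shiftW K v).countP p := fun p => countP_interleave p m u _ hmt hmf'
  have hlw : (interleave m u (shiftW K v)).length = i + v.length := by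
    rw [length_interleave m u _ hmt hmf']; simp [shiftW, hi]
  -- letters of u are ≤ K
  have hUK : ∀ x ∈ u, x ≤ K := by
    have h3K := h3 K le_rfl
    have hle : u.countP (fun x => decide (x ≤ K)) ≤ i := List.countP_le_length
    have : u.countP (fun x => decide (x ≤ K)) = u.length := by omega
    intro x hx
    simpa using List.countP_eq_length.mp this x hx
  have hdu1 := (dW_mem u).1
  have hdu2 := (dW_mem u).2
  have hdule := dW_le_len u
  by_cases hA : dW u ≤ i
  · -- case A : u is not yet parked
    set d := dW u with hd
    have hdK : d ≤ K := by
      by_contra hc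
      have : u.countP (fun x => decide (x ≤ d)) = u.length :=
        List.countP_eq_length.mpr (fun x hx => by simp; have := hUK x hx; omega)
      omega
    have hdW : dW (interleave m u (shiftW K v)) = d := by
      refine dW_eq hdu1 ?_ ?_
      · rw [hcw, countP_shiftW_le hdK v h4]
        omega
      · intro t ht
        rw [hcw]
        have := le_countP_of_lt_dW (w := u) (t := t) ht
        omega
    have hne : dW (interleave m u (shiftW K v)) ≠ (interleave m u (shiftW K v)).length + 1 := by
      rw [hdW, hlw]; omega
    rw [park_step hne, hdW]
    have hdec : decAbove d (interleave m u (shiftW K v))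
        = interleave m (decAbove d u) (shiftW (K - 1) v) := by
      rw [decAbove, map_interleave, ← decAbove, ← decAbove,
        decAbove_shiftW_all hdu1 hdK v h4]
    rw [hdec]
    have hKi : i + 1 ≤ K := by
      have := h3 d hdK
      omega
    have hsum : (decAbove d u).sum < u.sum := decAbove_sum_lt (w := u) (by omega)
    have h1' : ∀ x ∈ decAbove d u, 1 ≤ x := by
      intro x hx
      simp only [decAbove, List.mem_map] at hx
      obtain ⟨y, hy, rfl⟩ := hx
      have := h1 y hy
      split <;> omega
    have h3' : ∀ t, t ≤ K - 1 →
        t ≤ (decAbove d u).countP (fun x => decide (x ≤ t)) + (K - 1 - (decAbove d u).length) := by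
      intro t ht
      rw [length_decAbove]
      by_cases htd : t < d
      · rw [countP_decAbove_lt htd]
        have := le_countP_of_lt_dW (w := u) (t := t) (by omega)
        omega
      · rw [countP_decAbove_ge (by omega)]
        have := h3 (t+1) (by omega)
        omega
    have := ih (u.sum + v.sum + K - 1) (by omega) (K - 1) (decAbove d u) v m
      (by omega) h1' (by rw [length_decAbove]; omega) h3' h4
      (by rw [hmt, length_decAbove]) hmf
    rw [this, length_decAbove, ← park_step (w := u) (by omega)]
  · -- case B : u is a parking function
    have hB : dW u = i + 1 := by omega
    have hpu : park u = u := park_eq_self hB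
    have hui : ∀ x ∈ u, x ≤ i := by
      have hlow := le_countP_of_lt_dW (w := u) (t := i) (by omega)
      have hle : u.countP (fun x => decide (x ≤ i)) ≤ i := List.countP_le_length
      intro x hx
      have hc : u.countP (fun x => decide (x ≤ i)) = u.length := by omega
      simpa using List.countP_eq_length.mp hc x hx
    rcases List.eq_nil_or_concat' v with rfl | ⟨v', y, rfl⟩
    · -- v = []
      have hmz : m.count false = 0 := by simpa using hmf
      rw [show shiftW K ([] : List ℕ) = [] from rfl, interleave_nil_snd m u hmz hmt]
      have : park ([] : List ℕ) = [] := park_eq_self (by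
        have := dW_le_len ([] : List ℕ)
        have := (dW_mem ([] : List ℕ)).1
        simp at this ⊢
        omega)
      rw [this, show shiftW i ([] : List ℕ) = [] from rfl,
        interleave_nil_snd m (park u) hmz (by rw [park_length]; exact hmt), hpu]
    · -- v ≠ []
      set v := v' ++ [y] with hv
      have hvlen : 1 ≤ v.length := by simp [hv]
      by_cases hBK : i < K
      · -- peel the gap between i and K
        have hcui : u.countP (fun x => decide (x ≤ i + 1)) = u.length :=
          List.countP_eq_length.mpr (fun x hx => by simp; have := hui x hx; omega)
        have hdW : dW (interleave m u (shiftW K v)) = i + 1 := by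
          refine dW_eq (by omega) ?_ ?_
          · rw [hcw, countP_shiftW_le (by omega) v h4, hcui]
            omega
          · intro t ht
            rw [hcw]
            have := le_countP_of_lt_dW (w := u) (t := t) (by omega)
            omega
        have hne : dW (interleave m u (shiftW K v)) ≠ (interleave m u (shiftW K v)).length + 1 := by
          rw [hdW, hlw]; omega
        rw [park_step hne, hdW]
        have hdec : decAbove (i+1) (interleave m u (shiftW K v))
            = interleave m u (shiftW (K - 1) v) := by
          rw [decAbove, map_interleave, ← decAbove, ← decAbove,
            decAbove_shiftW_all (by omega) (by omega) v h4,
            decAbove_eq_self (fun x hx => by have := hui x hx; omega)]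
        rw [hdec]
        have h3' : ∀ t, t ≤ K - 1 →
            t ≤ u.countP (fun x => decide (x ≤ t)) + (K - 1 - u.length) := by
          intro t ht
          by_cases hti : t ≤ i
          · have := le_countP_of_lt_dW (w := u) (t := t) (by omega)
            omega
          · have : u.countP (fun x => decide (x ≤ t)) = u.length :=
              List.countP_eq_length.mpr (fun x hx => by simp; have := hui x hx; omega)
            omega
        exact ih (u.sum + v.sum + K - 1) (by omega) (K - 1) u v m
          (by omega) h1 (by omega) h3' h4 hmt hmf
      · -- K = i
        have hKi : K = i := by omega
        have hdv1 := (dW_mem v).1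
        have hdv2 := (dW_mem v).2
        have hdvle := dW_le_len v
        by_cases hva : dW v = v.length + 1
        · -- both parked : whole word parked
          have hpv : park v = v := park_eq_self hva
          have hdW : dW (interleave m u (shiftW K v))
              = (interleave m u (shiftW K v)).length + 1 := by
            rw [hlw]
            refine dW_eq (by omega) ?_ ?_
            · have := List.countP_le_length (l := interleave m u (shiftW K v))
                (p := fun x => decide (x ≤ i + v.length + 1))
              rw [hlw] at this
              omega
            · intro t ht
              rw [hcw]
              by_cases hti : t ≤ K
              · have hu := le_countP_of_lt_dW (w := u) (t := t) (by omega)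
                omega
              · have hcu : u.countP (fun x => decide (x ≤ t)) = u.length :=
                  List.countP_eq_length.mpr (fun x hx => by simp; have := hui x hx; omega)
                rw [countP_shiftW_ge (by omega) v]
                have := le_countP_of_lt_dW (w := v) (t := t - K) (by omega)
                omega
          rw [park_eq_self hdW, hpu, hpv, hKi]
        · -- v not parked
          have hdvl : dW v ≤ v.length := by omega
          have hdW : dW (interleave m u (shiftW K v)) = K + dW v := by
            refine dW_eq (by omega) ?_ ?_
            · rw [hcw, countP_shiftW_ge (by omega) v,
                show K + dW v - K = dW v by omega]
              have hcu : u.countP (fun x => decide (x ≤ K + dW v)) = u.length :=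
                List.countP_eq_length.mpr (fun x hx => by simp; have := hui x hx; omega)
              omega
            · intro t ht
              rw [hcw]
              by_cases hti : t ≤ K
              · have hu := le_countP_of_lt_dW (w := u) (t := t) (by omega)
                omega
              · have hcu : u.countP (fun x => decide (x ≤ t)) = u.length :=
                  List.countP_eq_length.mpr (fun x hx => by simp; have := hui x hx; omega)
                rw [countP_shiftW_ge (by omega) v]
                have := le_countP_of_lt_dW (w := v) (t := t - K) (by omega)
                omega
          have hne : dW (interleave m u (shiftW K v)) ≠ (interleave m u (shiftW K v)).length + 1 := by
            rw [hdW, hlw]; omega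
          rw [park_step hne, hdW]
          have hdec : decAbove (K + dW v) (interleave m u (shiftW K v))
              = interleave m u (shiftW K (decAbove (dW v) v)) := by
            rw [decAbove, map_interleave, ← decAbove, ← decAbove,
              decAbove_shiftW_inner v,
              decAbove_eq_self (fun x hx => by have := hui x hx; omega)]
          rw [hdec]
          have hsum : (decAbove (dW v) v).sum < v.sum := decAbove_sum_lt (w := v) (by omega)
          have h4' : ∀ x ∈ decAbove (dW v) v, 1 ≤ x := by
            intro x hx
            simp only [decAbove, List.mem_map] at hx
            obtain ⟨z, hz, rfl⟩ := hx
            have := h4 z hz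
            split <;> omega
          have := ih (u.sum + v.sum + K - 1) (by omega) K u (decAbove (dW v) v) m
            (by omega) h1 h2 h3 h4' hmt (by rw [hmf, length_decAbove])
          rw [this, ← park_step (w := v) (by omega)]


lemma map_park_shuffles (K : ℕ) (u v : List ℕ)
    (h1 : ∀ x ∈ u, 1 ≤ x) (h2 : u.length ≤ K)
    (h3 : ∀ t, t ≤ K → t ≤ u.countP (fun x => decide (x ≤ t)) + (K - u.length))
    (h4 : ∀ x ∈ v, 1 ≤ x) :
    (shuffles u (shiftW K v)).map park = shuffles (park u) (shiftW u.length (park v)) := by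
  rw [shuffles_eq_masks, shuffles_eq_masks]
  have l1 : (shiftW K v).length = v.length := by simp [shiftW]
  have l2 : (park u).length = u.length := park_length u
  have l3 : (shiftW u.length (park v)).length = v.length := by simp [shiftW, park_length]
  rw [l1, l2, l3]
  rw [Multiset.map_coe, List.map_map]
  congr 1
  refine List.map_congr_left (fun m hm => ?_)
  obtain ⟨hmt, hmf⟩ := masks_count u.length v.length m hm
  exact parkpt (u.sum + v.sum + K) K u v m le_rfl h1 h2 h3 h4 hmt hmf

lemma shuffles_nil_left (v : List ℕ) : shuffles [] v = {v} := by rw [shuffles]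

lemma shuffles_nil_right (u : List ℕ) : shuffles u [] = {u} := by
  cases u <;> rw [shuffles]

def splitTerm (u v : List ℕ) (j i : ℕ) : Multiset (List ℕ × List ℕ) :=
  if i ≤ j ∧ i ≤ u.length ∧ j - i ≤ v.length then
    (shuffles (u.take i) (v.take (j-i))).bind
      (fun p => (shuffles (u.drop i) (v.drop (j-i))).map (fun s => (p, s)))
  else 0

lemma multiset_map_finsetSum {α β ι : Type} (s : Finset ι) (g : ι → Multiset α) (f : α → β) :
    (∑ i ∈ s, g i).map f = ∑ i ∈ s, (g i).map f := by
  induction s using Finset.cons_induction with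
  | empty => simp
  | cons a s ha ih => simp [Finset.sum_cons, Multiset.map_add, ih]

lemma splitTerm_cons (x y : ℕ) (u' v' : List ℕ) (j' i : ℕ) :
    splitTerm (x::u') (y::v') (j'+1) i =
      (if 1 ≤ i then (splitTerm u' (y::v') j' (i-1)).map (Prod.map (x :: ·) id) else 0)
    + (if i ≤ j' then (splitTerm (x::u') v' j' i).map (Prod.map (y :: ·) id) else 0) := by
  rcases i with _ | i
  · -- i = 0
    rw [if_neg (by omega), if_pos (by omega), zero_add]
    by_cases hg : j' ≤ v'.length
    · rw [splitTerm, if_pos ⟨by omega, by omega, by simp; omega⟩,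
        splitTerm, if_pos ⟨by omega, by omega, by simpa⟩]
      simp only [Nat.sub_zero, List.take_zero, List.drop_zero, shuffles_nil_left,
        Multiset.singleton_bind, Multiset.map_map]
      rw [show (y::v').take (j'+1) = y :: v'.take j' from rfl,
        show (y::v').drop (j'+1) = v'.drop j' from rfl]
      rfl
    · rw [splitTerm, if_neg (by simp; omega), splitTerm, if_neg (by simp; omega), Multiset.map_zero]
  · -- i = i''+1
    rw [if_pos (by omega), Nat.add_sub_cancel]
    by_cases hij : i ≤ j'
    · by_cases hji : j' = i
      · -- right take is empty : only x-branch
        rw [if_neg (by omega), add_zero]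
        by_cases hu : i ≤ u'.length
        · rw [splitTerm, if_pos ⟨by omega, by simpa using hu, by simp; omega⟩,
            splitTerm, if_pos ⟨by omega, by simpa using hu, by simp; omega⟩]
          rw [show (j'+1) - (i+1) = 0 from by omega, show j' - i = 0 from by omega]
          simp only [List.take_zero, shuffles_nil_right, Multiset.singleton_bind,
            Multiset.map_map, List.drop_zero]
          rw [show (x::u').take (i+1) = x :: u'.take i from rfl,
            show (x::u').drop (i+1) = u'.drop i from rfl]
          rfl
        · rw [splitTerm, if_neg (by simp; omega), splitTerm, if_neg (by simp; omega)]
          simp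
      · -- both branches present
        have hji' : i + 1 ≤ j' := by omega
        rw [if_pos hji']
        by_cases hu : i ≤ u'.length
        · by_cases hv : j' - i ≤ v'.length + 1
          · rw [splitTerm, if_pos ⟨by omega, by simpa using hu, by simp; omega⟩,
              splitTerm, if_pos ⟨by omega, by simpa using hu, by simp; omega⟩,
              splitTerm, if_pos ⟨by omega, by simp; omega, by simp; omega⟩]
            rw [show (x::u').take (i+1) = x :: u'.take i from rfl,
              show (j'+1) - (i+1) = (j' - i - 1) + 1 from by omega,
              show (y::v').take ((j' - i - 1) + 1) = y :: v'.take (j' - i - 1) from rfl,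
              show (x::u').drop (i+1) = u'.drop i from rfl,
              show (y::v').drop ((j' - i - 1) + 1) = v'.drop (j' - i - 1) from rfl]
            rw [shuffles, Multiset.add_bind, Multiset.bind_map, Multiset.bind_map]
            congr 1
            · rw [show j' - i = (j' - i - 1) + 1 from by omega,
                show (y::v').take ((j' - i - 1) + 1) = y :: v'.take (j' - i - 1) from rfl,
                show (y::v').drop ((j' - i - 1) + 1) = v'.drop (j' - i - 1) from rfl,
                Multiset.map_bind]
              refine congrArg _ (funext fun p => ?_)
              simp [Multiset.map_map, Function.comp_def, Prod.map]
            · rw [show j' - (i+1) = j' - i - 1 from by omega, Multiset.map_bind]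
              refine congrArg _ (funext fun p => ?_)
              simp [Multiset.map_map, Function.comp_def, Prod.map]
          · rw [splitTerm, if_neg (by simp; omega), splitTerm, if_neg (by simp; omega),
              splitTerm, if_neg (by simp; omega)]
            simp
        · rw [splitTerm, if_neg (by simp; omega), splitTerm, if_neg (by simp; omega),
            splitTerm, if_neg (by simp; omega)]
          simp
    · rw [if_neg (show ¬ (i + 1 ≤ j') by omega), splitTerm, if_neg (by omega),
        splitTerm, if_neg (by omega)]
      simp

lemma split_shuffles : ∀ (u v : List ℕ) (j : ℕ), j ≤ u.length + v.length →
    (shuffles u v).map (fun c => (c.take j, c.drop j)) =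
    ∑ i ∈ Finset.range (j+1), splitTerm u v j i := by
  intro u
  induction u with
  | nil =>
    intro v j hj
    simp only [List.length_nil, Nat.zero_add] at hj
    rw [shuffles_nil_left]
    have : ∀ i ∈ Finset.range (j+1), splitTerm [] v j i = if i = 0 then {(v.take j, v.drop j)} else 0 := by
      intro i hi
      rcases Nat.eq_zero_or_pos i with rfl | hpos
      · rw [splitTerm, if_pos ⟨by omega, by omega, by simpa⟩]
        simp [shuffles_nil_left]
      · rw [splitTerm, if_neg (by simp; omega), if_neg (by omega)]
    rw [Finset.sum_congr rfl this, Finset.sum_ite_eq' (Finset.range (j+1)) 0 (fun _ => ({(v.take j, v.drop j)} : Multiset (List ℕ × List ℕ)))]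
    simp
  | cons x u' ihu =>
    intro v
    induction v with
    | nil =>
      intro j hj
      simp only [List.length_nil, Nat.add_zero] at hj
      rw [shuffles_nil_right]
      have : ∀ i ∈ Finset.range (j+1), splitTerm (x::u') [] j i
          = if i = j then {((x::u').take j, (x::u').drop j)} else 0 := by
        intro i hi
        simp only [Finset.mem_range] at hi
        by_cases hij : i = j
        · subst hij
          rw [splitTerm, if_pos ⟨le_rfl, by omega, by omega⟩]
          simp [shuffles_nil_right]
        · rw [splitTerm, if_neg (by simp; omega), if_neg hij]
      rw [Finset.sum_congr rfl this, Finset.sum_ite_eq' (Finset.range (j+1)) j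
        (fun _ => ({((x::u').take j, (x::u').drop j)} : Multiset (List ℕ × List ℕ)))]
      simp
    | cons y v' ihv =>
      intro j hj
      rcases j with _ | j'
      · -- j = 0
        rw [Finset.sum_range_one, splitTerm, if_pos ⟨le_rfl, by omega, by omega⟩]
        simp [shuffles_nil_left]
      · -- j = j'+1
        rw [shuffles, Multiset.map_add, Multiset.map_map, Multiset.map_map]
        have e1 : ((fun c => (List.take (j'+1) c, List.drop (j'+1) c)) ∘ (fun w => x :: w))
            = (Prod.map (x :: ·) id) ∘ (fun c : List ℕ => (c.take j', c.drop j')) := by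
          funext c; rfl
        have e2 : ((fun c => (List.take (j'+1) c, List.drop (j'+1) c)) ∘ (fun w => y :: w))
            = (Prod.map (y :: ·) id) ∘ (fun c : List ℕ => (c.take j', c.drop j')) := by
          funext c; rfl
        rw [e1, e2, ← Multiset.map_map, ← Multiset.map_map,
          ihu (y :: v') j' (by simp at hj ⊢; omega),
          ihv j' (by simp at hj ⊢; omega),
          multiset_map_finsetSum, multiset_map_finsetSum]
        rw [Finset.sum_congr rfl (fun i _ => splitTerm_cons x y u' v' j' i)]
        rw [Finset.sum_add_distrib]
        congr 1
        · rw [Finset.sum_range_succ' (fun i => if 1 ≤ i then (splitTerm u' (y::v') j' (i-1)).map (Prod.map (x :: ·) id) else 0) (j'+1)]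
          simp only [Nat.add_sub_cancel, if_pos (by omega : 1 ≤ 1), if_neg (by omega : ¬ 1 ≤ 0)]
          rw [add_zero]
          refine Finset.sum_congr rfl (fun i _ => ?_)
          rw [if_pos (by omega)]
        · rw [Finset.sum_range_succ (fun i => if i ≤ j' then (splitTerm (x::u') v' j' i).map (Prod.map (y :: ·) id) else 0) (j'+1)]
          rw [if_neg (by omega : ¬ j' + 1 ≤ j'), add_zero]
          refine Finset.sum_congr rfl (fun i hi => ?_)
          simp only [Finset.mem_range] at hi
          rw [if_pos (by omega)]


lemma multiset_countP_finsetSum {α ι : Type} (p : α → Prop) [DecidablePred p]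
    (s : Finset ι) (g : ι → Multiset α) :
    Multiset.countP p (∑ i ∈ s, g i) = ∑ i ∈ s, Multiset.countP p (g i) := by
  induction s using Finset.cons_induction with
  | empty => simp
  | cons a s ha ih => simp [Finset.sum_cons, Multiset.countP_add, ih]

lemma multiset_countP_bind {α β : Type} (p : β → Prop) [DecidablePred p]
    (s : Multiset α) (g : α → Multiset β) :
    Multiset.countP p (s.bind g) = ((s.map (fun a => Multiset.countP p (g a))).sum) := by
  induction s using Multiset.induction with
  | empty => simp
  | cons a s ih => simp [Multiset.cons_bind, Multiset.countP_add, ih]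

lemma msum_map_ite {α : Type} (s : Multiset α) (p : α → Prop) [DecidablePred p] (c : ℕ) :
    (s.map (fun a => if p a then c else 0)).sum = Multiset.countP p s * c := by
  induction s using Multiset.induction with
  | empty => simp
  | cons a s ih =>
    rw [Multiset.map_cons, Multiset.sum_cons, ih, Multiset.countP_cons]
    split <;> [skip; simp] <;> ring

lemma pf_countP {a : List ℕ} (ha : IsPF a) : ∀ t, t ≤ a.length →
    t ≤ a.countP (fun x => decide (x ≤ t)) := by
  intro t ht
  have hperm : (sortW a) ~ a := List.mergeSort_perm a _
  rw [← hperm.countP_eq]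
  have hlen : (sortW a).length = a.length := List.length_mergeSort a
  have htake : ((sortW a).take t).countP (fun x => decide (x ≤ t)) = ((sortW a).take t).length := by
    rw [List.countP_eq_length]
    intro x hx
    obtain ⟨i, hi, rfl⟩ := List.getElem_of_mem hx
    rw [List.getElem_take]
    have hilen : i < (sortW a).length := by
      have := (List.length_take (i := t) (l := sortW a)) ▸ hi
      omega
    have := ha.2 i (by omega)
    rw [List.getD_eq_getElem _ 0 hilen] at this
    have hit : i < t := by
      have := (List.length_take (i := t) (l := sortW a)) ▸ hi
      omega
    simp
    omega
  have hsplit : (sortW a).countP (fun x => decide (x ≤ t))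
      = ((sortW a).take t).countP (fun x => decide (x ≤ t))
        + ((sortW a).drop t).countP (fun x => decide (x ≤ t)) := by
    rw [← List.countP_append, List.take_append_drop]
  rw [hsplit, htake]
  have : ((sortW a).take t).length = t := by
    rw [List.length_take]
    omega
  omega

open Classical in
/-- bialgebra compatibility of PQSym: for `a ∈ PF_k`, `b ∈ PF_l`,
`n = k + l`, `0 ≤ j ≤ n`, `e ∈ PF_j` and `f ∈ PF_{n-j}`, the number (with shuffle
multiplicity) of words `c ∈ a ⋒ b` with `Park(c₁⋯c_j) = e` and `Park(c_{j+1}⋯c_n) = f`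
equals `Σ_i M₁(i) M₂(i)` where `i` ranges over `max(0, j-l) ≤ i ≤ min(j, k)`,
`M₁(i)` is the multiplicity of `e` in `Park(a₁⋯a_i) ⋒ Park(b₁⋯b_{j-i})` and `M₂(i)` is
the multiplicity of `f` in `Park(a_{i+1}⋯a_k) ⋒ Park(b_{j-i+1}⋯b_l)`. -/
theorem bialgebra_compatibility (k l n j : ℕ) (hn : n = k + l) (hj : j ≤ n)
    (a b e f : List ℕ) (ha : IsPF a) (hla : a.length = k)
    (hb : IsPF b) (hlb : b.length = l)
    (he : IsPF e) (hle : e.length = j) (hf : IsPF f) (hlf : f.length = n - j) :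
    Multiset.card ((sshuffle a b).filter
        (fun c => park (c.take j) = e ∧ park (c.drop j) = f))
      = ∑ i ∈ Finset.Icc (j - l) (min j k),
          (Multiset.count e (sshuffle (park (a.take i)) (park (b.take (j - i))))) *
          (Multiset.count f (sshuffle (park (a.drop i)) (park (b.drop (j - i))))) := by
  subst hn
  subst hla
  subst hlb
  set v := shiftW a.length b with hvdef
  have hvl : v.length = b.length := by simp [hvdef, shiftW]
  have h0 : Multiset.card ((sshuffle a b).filter
        (fun c => park (c.take j) = e ∧ park (c.drop j) = f))
      = Multiset.countP (fun pr : List ℕ × List ℕ => park pr.1 = e ∧ park pr.2 = f)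
          ((shuffles a v).map (fun c => (c.take j, c.drop j))) := by
    rw [Multiset.countP_map, ← Multiset.countP_eq_card_filter,
      show sshuffle a b = shuffles a v from rfl, ← Multiset.countP_eq_card_filter]
  rw [h0, split_shuffles a v j (by rw [hvl]; omega), multiset_countP_finsetSum]
  have hterm : ∀ i ∈ Finset.range (j+1),
      Multiset.countP (fun pr : List ℕ × List ℕ => park pr.1 = e ∧ park pr.2 = f)
        (splitTerm a v j i)
      = if i ≤ j ∧ i ≤ a.length ∧ j - i ≤ v.length then
          (Multiset.count e (sshuffle (park (a.take i)) (park (b.take (j - i))))) *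
          (Multiset.count f (sshuffle (park (a.drop i)) (park (b.drop (j - i))))) else 0 := by
    intro i _
    by_cases hg : i ≤ j ∧ i ≤ a.length ∧ j - i ≤ v.length
    · rw [if_pos hg, splitTerm, if_pos hg, multiset_countP_bind]
      set T2 := shuffles (a.drop i) (v.drop (j-i)) with hT2def
      have hT2 : ∀ p : List ℕ,
          Multiset.countP (fun pr : List ℕ × List ℕ => park pr.1 = e ∧ park pr.2 = f)
            (T2.map (fun s => (p, s)))
          = if park p = e then Multiset.countP (fun s => park s = f) T2 else 0 := by
        intro p
        by_cases hp : park p = e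
        · rw [Multiset.countP_map, if_pos hp, Multiset.countP_eq_card_filter]
          congr 1
          exact Multiset.filter_congr (fun s _ => by simp [hp])
        · rw [if_neg hp]
          refine Multiset.countP_eq_zero.mpr (fun pr hpr => ?_)
          obtain ⟨s, _, rfl⟩ := Multiset.mem_map.mp hpr
          simp [hp]
      rw [Multiset.map_congr rfl (fun p _ => hT2 p), msum_map_ite]
      have hcount : ∀ (g : List ℕ) (T : Multiset (List ℕ)),
          Multiset.countP (fun p => park p = g) T = Multiset.count g (T.map park) := by
        intro g T
        rw [Multiset.count_map, Multiset.countP_eq_card_filter]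
        congr 1
        exact Multiset.filter_congr (fun p _ => eq_comm)
      rw [hcount e, hcount f]
      have hmp1 : (shuffles (a.take i) (v.take (j-i))).map park
          = sshuffle (park (a.take i)) (park (b.take (j - i))) := by
        have hvt : v.take (j-i) = shiftW a.length (b.take (j-i)) := by
          rw [hvdef, shiftW, shiftW, List.map_take]
        rw [hvt, map_park_shuffles a.length (a.take i) (b.take (j-i))
          (fun x hx => ha.1 x (List.take_subset _ _ hx))
          (by rw [List.length_take]; omega)
          (fun t ht => by
            have hs : a.countP (fun x => decide (x ≤ t))
                = (a.take i).countP (fun x => decide (x ≤ t))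
                  + (a.drop i).countP (fun x => decide (x ≤ t)) := by
              rw [← List.countP_append, List.take_append_drop]
            have h4 := pf_countP ha t ht
            have hdl := List.countP_le_length (l := a.drop i) (p := fun x => decide (x ≤ t))
            have : (a.drop i).length = a.length - i := List.length_drop (i := i) (l := a)
            have : (a.take i).length = i := by rw [List.length_take]; omega
            omega)
          (fun x hx => hb.1 x (List.take_subset _ _ hx))]
        rw [show sshuffle (park (a.take i)) (park (b.take (j - i)))
            = shuffles (park (a.take i)) (shiftW (park (a.take i)).length (park (b.take (j - i)))) from rfl,
          park_length]
      have hmp2 : (shuffles (a.drop i) (v.drop (j-i))).map park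
          = sshuffle (park (a.drop i)) (park (b.drop (j - i))) := by
        have hvt : v.drop (j-i) = shiftW a.length (b.drop (j-i)) := by
          rw [hvdef, shiftW, shiftW, List.map_drop]
        rw [hvt, map_park_shuffles a.length (a.drop i) (b.drop (j-i))
          (fun x hx => ha.1 x (List.drop_subset _ _ hx))
          (by rw [List.length_drop]; omega)
          (fun t ht => by
            have hs : a.countP (fun x => decide (x ≤ t))
                = (a.take i).countP (fun x => decide (x ≤ t))
                  + (a.drop i).countP (fun x => decide (x ≤ t)) := by
              rw [← List.countP_append, List.take_append_drop]
            have h4 := pf_countP ha t ht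
            have htl := List.countP_le_length (l := a.take i) (p := fun x => decide (x ≤ t))
            have : (a.drop i).length = a.length - i := List.length_drop (i := i) (l := a)
            have : (a.take i).length = i := by rw [List.length_take]; omega
            omega)
          (fun x hx => hb.1 x (List.drop_subset _ _ hx))]
        rw [show sshuffle (park (a.drop i)) (park (b.drop (j - i)))
            = shuffles (park (a.drop i)) (shiftW (park (a.drop i)).length (park (b.drop (j - i)))) from rfl,
          park_length]
      rw [hT2def, hmp1, hmp2]
    · rw [if_neg hg, splitTerm, if_neg hg]
      simp
  rw [Finset.sum_congr rfl hterm, ← Finset.sum_filter]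
  refine Finset.sum_congr ?_ (fun _ _ => rfl)
  ext i
  simp only [Finset.mem_filter, Finset.mem_range, Finset.mem_Icc, hvl]
  omega
end
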